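/- Let F = (W, ≤) be a finite rooted S4.1-frame with root q. If the depth of q is at least 3, F has at least two maximal points, and for every w ∈ W outside the cluster of q the generated subframe ↑w has a unique maximal point, then the frame T₂ (with underlying set {r, v, w₁, w₂} and order generated by r ≤ v, r ≤ w₁, w₁ ≤ w₂, plus reflexivity) is a p-morphic image of F. -/

import Mathlib

/-- `m` is a maximal point: `↑m = {m}`. -/
def IsMaxPt {W : Type*} (le : W → W → Prop) (m : W) : Prop :=
  ∀ x, le m x → x = m

/-- The depth of `w` is at most `n`: every strictly ascending chain (each step goes up and
not back down, i.e. moves to a strictly higher cluster) starting at `w` has length at most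
`n`. -/
def DepthLE {W : Type*} (le : W → W → Prop) (w : W) (n : ℕ) : Prop :=
  ∀ l : List W, l.head? = some w → l.Chain' (fun a b => le a b ∧ ¬ le b a) → l.length ≤ n

/-- `s` is a splitting point witnessing the `n`-roach condition: `s` has depth at most `n`,
the up-set `↑s` is partially ordered (the restriction of `le` is antisymmetric on it), and
for every `w` there is `t_w ∈ ↑s` with `↑w ∩ ↑s = ↑t_w`. -/
def IsSplittingPoint {W : Type*} (le : W → W → Prop) (n : ℕ) (s : W) : Prop :=
  DepthLE le s n ∧
  (∀ a b, le s a → le s b → le a b → le b a → a = b) ∧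
  (∀ w, ∃ t, le s t ∧ ∀ x, (le w x ∧ le s x) ↔ le t x)

/-- An `n`-roach: a frame possessing a splitting point of depth at most `n`. -/
def IsNRoach {W : Type*} (le : W → W → Prop) (n : ℕ) : Prop :=
  ∃ s, IsSplittingPoint le n s

/-- The order of the frame `T₂` on `{r, v, w₁, w₂} = {0, 1, 2, 3}`: generated by
`r ≤ v`, `r ≤ w₁`, `w₁ ≤ w₂` together with reflexivity (and transitivity, so
`r ≤ w₂`). -/
def leT2 : Fin 4 → Fin 4 → Prop := fun a b => a = b ∨ a = 0 ∨ (a = 2 ∧ b = 3)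

/-- If a finite rooted S4.1-frame has root `q` of depth at least 3, at least two maximal
points, and every point outside the cluster of `q` sees a unique maximal point, then the
frame `T₂` is a p-morphic image of the frame. -/
theorem stmt_17 {W : Type*} [Fintype W] (le : W → W → Prop)
    (hrefl : ∀ w, le w w)
    (htrans : ∀ a b c, le a b → le b c → le a c)
    (q : W) (hroot : ∀ w, le q w)
    (hs41 : ∀ w, ∃ m, le w m ∧ IsMaxPt le m)
    (hdepth : ¬ DepthLE le q 2)
    (htwomax : ∃ m₁ m₂, m₁ ≠ m₂ ∧ IsMaxPt le m₁ ∧ IsMaxPt le m₂)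
    (huniq : ∀ w, ¬ (le q w ∧ le w q) → ∃! m, le w m ∧ IsMaxPt le m) :
    ∃ f : W → Fin 4, Function.Surjective f ∧
      (∀ w u, le w u → leT2 (f w) (f u)) ∧
      (∀ w v, leT2 (f w) v → ∃ u, le w u ∧ f u = v) := by
  classical
  unfold DepthLE at hdepth
  push_neg at hdepth
  obtain ⟨l, hhead, hchain, hlen⟩ := hdepth
  rcases l with _ | ⟨x, _ | ⟨y, _ | ⟨z, rest⟩⟩⟩
  · simp at hlen
  · simp at hlen
  · simp at hlen
  have hx : x = q := by simpa using hhead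
  subst x
  rw [List.Chain', List.isChain_cons_cons] at hchain
  obtain ⟨⟨hqy, hnyq⟩, hchain⟩ := hchain
  rw [List.isChain_cons_cons] at hchain
  obtain ⟨⟨hyz, hnzy⟩, -⟩ := hchain
  -- the unique maximal point above y
  obtain ⟨m, hym, hmmax⟩ := hs41 y
  -- any maximal point is outside the root cluster
  have hmaxnq : ∀ p, IsMaxPt le p → ¬ le p q := by
    intro p hp hpq
    have hq : q = p := hp q hpq
    subst hq
    have hyq : y = q := hp y hqy
    exact hnyq (by rw [hyq]; exact hrefl q)
  have hmq : ¬ le m q := hmaxnq m hmmax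
  -- key: every point above a point (outside root cluster) seeing only m, sees only m
  have hkey : ∀ w u, ¬ le w q → le w m → le w u → le u m := by
    intro w u hwq hwm hwu
    obtain ⟨mu, hmu, hmumax⟩ := hs41 u
    obtain ⟨p, -, hup⟩ := huniq w (fun h => hwq h.2)
    have h1 : mu = p := hup mu ⟨htrans _ _ _ hwu hmu, hmumax⟩
    have h2 : m = p := hup m ⟨hwm, hmmax⟩
    rw [h1, ← h2] at hmu
    exact hmu
  -- z sees m
  have hzm : le z m := hkey y z hnyq hym hyz
  -- a second maximal point m' ≠ m
  obtain ⟨m₁, m₂, hne, h1max, h2max⟩ := htwomax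
  obtain ⟨m', hm'max, hm'ne⟩ : ∃ m', IsMaxPt le m' ∧ m' ≠ m := by
    by_cases h : m₁ = m
    · exact ⟨m₂, h2max, fun hh => hne (by rw [h, hh])⟩
    · exact ⟨m₁, h1max, h⟩
  have hm'q : ¬ le m' q := hmaxnq m' hm'max
  have hm'm : ¬ le m' m := fun h => hm'ne (hm'max m h).symm
  -- the p-morphism
  set f : W → Fin 4 := fun w =>
    if le w q then 0 else if le w m then (if le z w then 3 else 2) else 1 with hf
  have f0 : ∀ w, le w q → f w = 0 := by intro w h; simp only [hf]; rw [if_pos h]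
  have f3 : ∀ w, ¬ le w q → le w m → le z w → f w = 3 := by
    intro w h1 h2 h3; simp only [hf]; rw [if_neg h1, if_pos h2, if_pos h3]
  have f2 : ∀ w, ¬ le w q → le w m → ¬ le z w → f w = 2 := by
    intro w h1 h2 h3; simp only [hf]; rw [if_neg h1, if_pos h2, if_neg h3]
  have f1 : ∀ w, ¬ le w q → ¬ le w m → f w = 1 := by
    intro w h1 h2; simp only [hf]; rw [if_neg h1, if_neg h2]
  have hfq : f q = 0 := f0 q (hrefl q)
  have hfy : f y = 2 := f2 y hnyq hym hnzy
  have hfm : f m = 3 := f3 m hmq (hrefl m) hzm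
  have hfm' : f m' = 1 := f1 m' hm'q hm'm
  refine ⟨f, ?_, ?_, ?_⟩
  · intro v
    fin_cases v
    · exact ⟨q, hfq⟩
    · exact ⟨m', hfm'⟩
    · exact ⟨y, hfy⟩
    · exact ⟨m, hfm⟩
  · intro w u hwu
    by_cases hwq : le w q
    · rw [f0 w hwq]; exact Or.inr (Or.inl rfl)
    · have huq : ¬ le u q := fun h => hwq (htrans _ _ _ hwu h)
      by_cases hwm : le w m
      · have hum : le u m := hkey w u hwq hwm hwu
        by_cases hzw : le z w
        · rw [f3 w hwq hwm hzw, f3 u huq hum (htrans _ _ _ hzw hwu)]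
          exact Or.inl rfl
        · rw [f2 w hwq hwm hzw]
          by_cases hzu : le z u
          · rw [f3 u huq hum hzu]; exact Or.inr (Or.inr ⟨rfl, rfl⟩)
          · rw [f2 u huq hum hzu]; exact Or.inl rfl
      · have hum : ¬ le u m := fun h => hwm (htrans _ _ _ hwu h)
        rw [f1 w hwq hwm, f1 u huq hum]; exact Or.inl rfl
  · intro w v hv
    by_cases hwq : le w q
    · have hw : ∀ u, le w u := fun u => htrans _ _ _ hwq (hroot u)
      fin_cases v
      · exact ⟨q, hw q, hfq⟩
      · exact ⟨m', hw m', hfm'⟩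
      · exact ⟨y, hw y, hfy⟩
      · exact ⟨m, hw m, hfm⟩
    · by_cases hwm : le w m
      · by_cases hzw : le z w
        · rw [f3 w hwq hwm hzw] at hv
          rcases hv with rfl | hv | ⟨hv, rfl⟩
          · exact ⟨w, hrefl w, f3 w hwq hwm hzw⟩
          · exact absurd hv (by decide)
          · exact absurd hv (by decide)
        · rw [f2 w hwq hwm hzw] at hv
          rcases hv with rfl | hv | ⟨-, rfl⟩
          · exact ⟨w, hrefl w, f2 w hwq hwm hzw⟩
          · exact absurd hv (by decide)
          · exact ⟨m, hwm, hfm⟩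
      · rw [f1 w hwq hwm] at hv
        rcases hv with rfl | hv | ⟨hv, rfl⟩
        · exact ⟨w, hrefl w, f1 w hwq hwm⟩
        · exact absurd hv (by decide)
        · exact absurd hv (by decide)
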